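/- If an arithmetic circuit AC(X) computes the marginals of a factor f(X), then it computes f(X); however, the converse fails: there exists an arithmetic circuit that computes a factor but does not compute its marginals. -/
import Mathlib
set_option linter.unnecessarySeqFocus false


/-- An arithmetic circuit over variables `ι` with values `α`: leaves are indicator
variables `λ_{i,v}` or real parameters; internal nodes are sums or products. -/
inductive AC (ι α : Type) : Type where
  | ind (i : ι) (v : α)
  | param (θ : ℝ)
  | sum (l r : AC ι α)
  | prod (l r : AC ι α)

namespace AC

variable {ι α : Type} [Fintype ι] [DecidableEq ι] [Fintype α] [DecidableEq α]

/-- Evaluate the circuit under a circuit input `Λ` assigning 0/1 to each indicator. -/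
def eval (Λ : ι → α → Bool) : AC ι α → ℝ
  | ind i v => if Λ i v then 1 else 0
  | param θ => θ
  | sum l r => l.eval Λ + r.eval Λ
  | prod l r => l.eval Λ * r.eval Λ

/-- Evaluate the maximizer circuit (sum nodes replaced by max nodes). -/
def evalMax (Λ : ι → α → Bool) : AC ι α → ℝ
  | ind i v => if Λ i v then 1 else 0
  | param θ => θ
  | sum l r => max (l.evalMax Λ) (r.evalMax Λ)
  | prod l r => l.evalMax Λ * r.evalMax Λ

/-- The circuit input corresponding to a full instantiation `x`. -/
def inputOf (x : ι → α) : ι → α → Bool := fun i v => decide (x i = v)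

/-- The circuit input corresponding to a partial instantiation `y`:
an indicator is set to 1 iff its value is compatible with `y`. -/
def pinputOf (y : ι → Option α) : ι → α → Bool := fun i v =>
  match y i with
  | none => true
  | some w => decide (w = v)

/-- The value `AC(x)` of the circuit at a full instantiation `x`. -/
def evalAt (x : ι → α) (c : AC ι α) : ℝ := c.eval (inputOf x)

/-- The value `AC(y)` of the circuit at a partial instantiation `y`. -/
def evalP (y : ι → Option α) (c : AC ι α) : ℝ := c.eval (pinputOf y)

/-- Maximizer-circuit value at a full instantiation. -/
def evalMaxAt (x : ι → α) (c : AC ι α) : ℝ := c.evalMax (inputOf x)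

/-- Maximizer-circuit value at a partial instantiation. -/
def evalMaxP (y : ι → Option α) (c : AC ι α) : ℝ := c.evalMax (pinputOf y)

/-- `vars n`: variables with some indicator at or under the node. -/
def vars : AC ι α → Finset ι
  | ind i _ => {i}
  | param _ => ∅
  | sum l r => l.vars ∪ r.vars
  | prod l r => l.vars ∪ r.vars

/-- The multiset of parameters appearing in the circuit. -/
def params : AC ι α → Multiset ℝ
  | ind _ _ => 0
  | param θ => {θ}
  | sum l r => l.params + r.params
  | prod l r => l.params + r.params

/-- Decomposability: children of every `*`-node have disjoint variable sets. -/
def Decomposable : AC ι α → Prop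
  | ind _ _ => True
  | param _ => True
  | sum l r => l.Decomposable ∧ r.Decomposable
  | prod l r => Disjoint l.vars r.vars ∧ l.Decomposable ∧ r.Decomposable

/-- Smoothness: every child of a `+`-node mentions the same variables as the node. -/
def Smooth : AC ι α → Prop
  | ind _ _ => True
  | param _ => True
  | sum l r => l.vars = r.vars ∧ l.Smooth ∧ r.Smooth
  | prod l r => l.Smooth ∧ r.Smooth

/-- Determinism: under every full instantiation, every `+`-node has at most one
non-zero input. -/
def Deterministic : AC ι α → Prop
  | ind _ _ => True
  | param _ => True
  | sum l r => (∀ x : ι → α, l.evalAt x = 0 ∨ r.evalAt x = 0) ∧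
      l.Deterministic ∧ r.Deterministic
  | prod l r => l.Deterministic ∧ r.Deterministic

/-- A full instantiation `x` is compatible with a partial instantiation `y`. -/
def Compat (x : ι → α) (y : ι → Option α) : Prop :=
  ∀ i, y i = none ∨ y i = some (x i)

instance (x : ι → α) (y : ι → Option α) : Decidable (Compat x y) := by
  unfold Compat; infer_instance

/-- The graph of a full instantiation, i.e. its term `{(i, x i) | i}`. -/
def graphOf (x : ι → α) : Finset (ι × α) := Finset.univ.image fun i => (i, x i)

/-- The marginal `Σ_{x ∼ y} f(x)` of a factor `f` at a partial instantiation `y`. -/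
def margSum (f : (ι → α) → ℝ) (y : ι → Option α) : ℝ :=
  ∑ x : ι → α, if Compat x y then f x else 0

/-- The circuit computes the factor `f`. -/
def Computes (c : AC ι α) (f : (ι → α) → ℝ) : Prop := ∀ x, c.evalAt x = f x

/-- The circuit computes the marginals of the factor `f`. -/
def ComputesMarginals (c : AC ι α) (f : (ι → α) → ℝ) : Prop :=
  ∀ y : ι → Option α, c.evalP y = margSum f y

/-- The multiset of (term, coefficient) pairs of all complete subcircuits. -/
def subs : AC ι α → Multiset (Finset (ι × α) × ℝ)
  | ind i v => {({(i, v)}, 1)}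
  | param θ => {(∅, θ)}
  | sum l r => l.subs + r.subs
  | prod l r => l.subs.bind fun a => r.subs.map fun b => (a.1 ∪ b.1, a.2 * b.2)

/-- Complete subcircuits of a circuit: choose one child of each `+`-node and all
children of each `*`-node. -/
inductive Sub : AC ι α → Type where
  | ind (i : ι) (v : α) : Sub (AC.ind i v)
  | param (θ : ℝ) : Sub (AC.param θ)
  | sumL {l r : AC ι α} : Sub l → Sub (AC.sum l r)
  | sumR {l r : AC ι α} : Sub r → Sub (AC.sum l r)
  | prod {l r : AC ι α} : Sub l → Sub r → Sub (AC.prod l r)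

/-- The term of a complete subcircuit: the set of indicator values appearing in it. -/
def Sub.term : {c : AC ι α} → Sub c → Finset (ι × α)
  | _, .ind i v => {(i, v)}
  | _, .param _ => ∅
  | _, .sumL s => s.term
  | _, .sumR s => s.term
  | _, .prod s t => s.term ∪ t.term

/-- The coefficient of a complete subcircuit: the product of its parameters. -/
def Sub.coeff : {c : AC ι α} → Sub c → ℝ
  | _, .ind _ _ => 1
  | _, .param θ => θ
  | _, .sumL s => s.coeff
  | _, .sumR s => s.coeff
  | _, .prod s t => s.coeff * t.coeff


end AC


/-- Computing marginals implies computing the factor, but not conversely: there is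
a circuit (over two binary variables) that computes a factor without computing its
marginals. -/
theorem stmt12 {ι α : Type} [Fintype ι] [DecidableEq ι] [Fintype α] [DecidableEq α] :
    (∀ (c : AC ι α) (f : (ι → α) → ℝ), c.ComputesMarginals f → c.Computes f) ∧
    (∃ (c : AC (Fin 2) Bool) (f : (Fin 2 → Bool) → ℝ),
      (∀ x, 0 ≤ f x) ∧ c.Computes f ∧ ¬ c.ComputesMarginals f) := by
  constructor
  · intro c f h x
    have hy := h (fun i => some (x i))
    have h1 : c.evalP (fun i => some (x i)) = c.evalAt x := by
      unfold AC.evalP AC.evalAt AC.pinputOf AC.inputOf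
      rfl
    have h2 : AC.margSum f (fun i => some (x i)) = f x := by
      unfold AC.margSum
      rw [Finset.sum_eq_single x]
      · simp [AC.Compat]
      · intro b _ hb
        rw [if_neg]
        intro hc
        apply hb
        funext i
        rcases hc i with h | h
        · exact absurd h (by simp)
        · exact (Option.some_injective _ h).symm
      · simp
    rw [h1, h2] at hy
    exact hy
  · refine ⟨AC.sum (AC.ind 0 true) (AC.ind 0 true),
      fun x => if x 0 then 2 else 0, ?_, ?_, ?_⟩
    · intro x; dsimp only; split <;> norm_num
    · intro x
      unfold AC.evalAt AC.eval AC.inputOf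
      by_cases h : x 0 <;> simp [h, AC.eval] <;> norm_num
    · intro hm
      have := hm (fun _ => none)
      unfold AC.evalP AC.eval AC.pinputOf AC.margSum AC.Compat at this
      simp only [AC.eval] at this
      simp only [if_pos trivial, forall_const, true_or, if_true] at this
      have h4 : (∑ x : Fin 2 → Bool, if x 0 = true then (2:ℝ) else 0)
          = ∑ p : Bool × Bool, if p.1 = true then (2:ℝ) else 0 :=
        Fintype.sum_equiv (piFinTwoEquiv fun _ => Bool) _ _ (fun x => rfl)
      rw [h4, Fintype.sum_prod_type] at this
      simp at this
      norm_num at this
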